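/- For every natural number n, the number of n-element subsets of Fin 4 × Fin 13 containing a straight equals the sum, over all functions t : Fin 13 → ℕ satisfying t(i) ≤ 4 for every i, ∑ i, t(i) = n, and such that the set of ranks i with t(i) ≥ 1 contains a run, of the product ∏ i, (4 choose t(i)). -/

import Mathlib

attribute [local instance] Classical.propDecidable

/-- A hand contains a flush if some suit appears on at least 5 of its cards. -/
def HasFlush (H : Finset (Fin 4 × Fin 13)) : Prop :=
  ∃ s : Fin 4, 5 ≤ (H.filter (fun c => c.1 = s)).card

/-- A hand contains a full house if some rank appears on ≥3 cards and a different
rank appears on ≥2 cards. -/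
def HasFullHouse (H : Finset (Fin 4 × Fin 13)) : Prop :=
  ∃ r s : Fin 13, r ≠ s ∧ 3 ≤ (H.filter (fun c => c.2 = r)).card ∧
    2 ≤ (H.filter (fun c => c.2 = s)).card

/-- A set of ranks contains a run iffive consecutive ranks
starting at some i ≤ 9 all belong to it. -/
def HasRun (R : Finset (Fin 13)) : Prop :=
  ∃ i : ℕ, i ≤ 9 ∧ ∀ j : ℕ, j ≤ 4 →
    (⟨(i + j) % 13, Nat.mod_lt _ (by norm_num)⟩ : Fin 13) ∈ R

/-- A hand contains a straight if its set of ranks contains a run. -/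
def HasStraight (H : Finset (Fin 4 × Fin 13)) : Prop :=
  HasRun (H.image Prod.snd)

/-- Number of n-card hands containing a flush. -/
noncomputable def flushCount (n : ℕ) : ℕ :=
  ((Finset.univ.powersetCard n : Finset (Finset (Fin 4 × Fin 13))).filter HasFlush).card

/-- Number of n-card hands containing a full house. -/
noncomputable def fullHouseCount (n : ℕ) : ℕ :=
  ((Finset.univ.powersetCard n : Finset (Finset (Fin 4 × Fin 13))).filter HasFullHouse).card

/-- Number of n-card hands containing a straight. -/
noncomputable def straightCount (n : ℕ) : ℕ :=
  ((Finset.univ.powersetCard n : Finset (Finset (Fin 4 × Fin 13))).filter HasStraight).card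

open Finset

noncomputable def cnt (H : Finset (Fin 4 × Fin 13)) : Fin 13 → ℕ :=
  fun i => (H.filter (fun c => c.2 = i)).card

lemma cnt_eq_card_image (H : Finset (Fin 4 × Fin 13)) (i : Fin 13) :
    cnt H i = ((H.filter (fun c => c.2 = i)).image Prod.fst).card := by
  rw [cnt, Finset.card_image_of_injOn]
  intro a ha b hb hab
  simp only [Finset.mem_coe, Finset.mem_filter] at ha hb
  exact Prod.ext hab (ha.2.trans hb.2.symm)

lemma cnt_le_four (H : Finset (Fin 4 × Fin 13)) (i : Fin 13) : cnt H i ≤ 4 := by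
  rw [cnt_eq_card_image]
  calc ((H.filter (fun c => c.2 = i)).image Prod.fst).card ≤ Fintype.card (Fin 4) :=
        Finset.card_le_univ _
    _ = 4 := by simp

lemma sum_cnt (H : Finset (Fin 4 × Fin 13)) : ∑ i, cnt H i = H.card := by
  exact (Finset.card_eq_sum_card_fiberwise (fun x _ => Finset.mem_univ x.2)).symm

lemma image_snd_eq (H : Finset (Fin 4 × Fin 13)) :
    H.image Prod.snd = Finset.univ.filter (fun i => 1 ≤ cnt H i) := by
  ext i
  simp only [Finset.mem_image, Finset.mem_filter, Finset.mem_univ, true_and,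
    Nat.one_le_iff_ne_zero, ← Nat.pos_iff_ne_zero, cnt, Finset.card_pos,
    Finset.Nonempty, Finset.mem_filter]

theorem straight_count_formula (n : ℕ) :
    straightCount n =
      ∑ t ∈ (Fintype.piFinset (fun _ : Fin 13 => Finset.range 5)).filter
          (fun t => ∑ i, t i = n ∧ HasRun (Finset.univ.filter (fun i => 1 ≤ t i))),
        ∏ i, Nat.choose 4 (t i) := by
  classical
  rw [straightCount,
    Finset.card_eq_sum_card_fiberwise (f := cnt)
      (t := (Fintype.piFinset (fun _ : Fin 13 => Finset.range 5)).filter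
          (fun t => ∑ i, t i = n ∧ HasRun (Finset.univ.filter (fun i => 1 ≤ t i))))
      (by
        intro H hH
        simp only [Finset.mem_coe, Finset.mem_filter, Finset.mem_powersetCard_univ] at hH
        obtain ⟨hcard, hstr⟩ := hH
        simp only [Finset.mem_coe, Finset.mem_filter, Fintype.mem_piFinset, Finset.mem_range]
        refine ⟨fun i => Nat.lt_succ_of_le (cnt_le_four H i), ?_, ?_⟩
        · rw [sum_cnt, hcard]
        · rw [← image_snd_eq]; exact hstr)]
  refine Finset.sum_congr rfl (fun t ht => ?_)
  simp only [Finset.mem_filter, Fintype.mem_piFinset, Finset.mem_range] at ht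
  obtain ⟨hle, hsum, hrun⟩ := ht
  -- fiber card = ∏ choose 4 (t i)
  have key : (((Finset.univ.powersetCard n :
        Finset (Finset (Fin 4 × Fin 13))).filter HasStraight).filter
        (fun H => cnt H = t)).card
      = (Fintype.piFinset (fun i : Fin 13 =>
          (Finset.univ : Finset (Fin 4)).powersetCard (t i))).card := by
    apply Finset.card_nbij'
      (i := fun H i => (H.filter (fun c => c.2 = i)).image Prod.fst)
      (j := fun f => Finset.univ.filter (fun c : Fin 4 × Fin 13 => c.1 ∈ f c.2))
    · intro H hH
      simp only [Finset.mem_coe, Finset.mem_filter] at hH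
      simp only [Finset.mem_coe, Fintype.mem_piFinset, Finset.mem_powersetCard_univ]
      intro i
      rw [← cnt_eq_card_image, hH.2]
    · intro f hf
      simp only [Finset.mem_coe, Fintype.mem_piFinset, Finset.mem_powersetCard_univ] at hf
      have hfilt : ∀ i, ((Finset.univ.filter
          (fun c : Fin 4 × Fin 13 => c.1 ∈ f c.2)).filter (fun c => c.2 = i))
          = (f i).image (fun a => (a, i)) := by
        intro i
        ext ⟨a, b⟩
        simp only [Finset.mem_filter, Finset.mem_univ, true_and, Finset.mem_image]
        constructor
        · rintro ⟨h1, rfl⟩; exact ⟨a, h1, rfl⟩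
        · rintro ⟨x, hx, h⟩
          injection h with h1 h2
          subst h1; subst h2
          exact ⟨hx, rfl⟩
      have hcnt : cnt (Finset.univ.filter (fun c : Fin 4 × Fin 13 => c.1 ∈ f c.2)) = t := by
        funext i
        rw [cnt, hfilt i, Finset.card_image_of_injective _ (fun a b h => (Prod.mk.injEq ..).mp h |>.1), hf i]
      simp only [Finset.mem_coe, Finset.mem_filter, Finset.mem_powersetCard_univ]
      refine ⟨⟨?_, ?_⟩, hcnt⟩
      · rw [← sum_cnt, hcnt, hsum]
      · rw [HasStraight, image_snd_eq, hcnt]; exact hrun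
    · intro H hH
      simp only [Finset.mem_coe, Finset.mem_filter] at hH
      ext ⟨a, b⟩
      simp only [Finset.mem_filter, Finset.mem_univ, true_and, Finset.mem_image,
        Finset.mem_filter]
      constructor
      · rintro ⟨⟨x, y⟩, ⟨hxy, rfl⟩, rfl⟩; exact hxy
      · intro hab; exact ⟨(a, b), ⟨hab, rfl⟩, rfl⟩
    · intro f hf
      funext i
      ext a
      simp only [Finset.mem_image, Finset.mem_filter, Finset.mem_univ, true_and]
      constructor
      · rintro ⟨⟨x, y⟩, ⟨hxy, rfl⟩, rfl⟩; exact hxy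
      · intro ha; exact ⟨(a, i), ⟨ha, rfl⟩, rfl⟩
  rw [key, Fintype.card_piFinset]
  refine Finset.prod_congr rfl (fun i _ => ?_)
  rw [Finset.card_powersetCard, Finset.card_univ, Fintype.card_fin]
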